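/- Let f(n) = E[|φ(S_n)|] where S_n is a uniformly random n-subset of V. Then f satisfies the recursion f(n) = f(n−1) + E[|T(S_n)|]/n for n ≥ 1 (with f(0) = |φ(∅)| = 0), and consequently f(n) = Σ_{i=1}^n E[|T(S_i)|]/i. -/

import Mathlib

open Finset

variable {α : Type*} [DecidableEq α] [Fintype α]

/-- Elements of `φ S` covered by exactly one singleton expansion. -/
def Tset (φ : Finset α → Finset α) (S : Finset α) : Finset α :=
  (φ S).filter (fun w => (S.filter (fun s => w ∈ φ {s})).card = 1)

/-- `f(n) = E[|φ(S_n)|]` over uniformly random `n`-subsets `S_n` of the vertex set. -/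
def Ef (φ : Finset α → Finset α) (n : ℕ) : ℚ :=
  (∑ S ∈ powersetCard n (univ : Finset α), ((φ S).card : ℚ)) /
    ((powersetCard n (univ : Finset α)).card : ℚ)

/-- `E[|T(S_n)|]` over uniformly random `n`-subsets `S_n` of the vertex set. -/
def ET (φ : Finset α → Finset α) (n : ℕ) : ℚ :=
  (∑ S ∈ powersetCard n (univ : Finset α), ((Tset φ S).card : ℚ)) /
    ((powersetCard n (univ : Finset α)).card : ℚ)

lemma count_erase (φ : Finset α → Finset α)
    (hφ : ∀ S : Finset α, φ S = S.biUnion (fun s => φ {s}))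
    (S : Finset α) (w : α) (hw : w ∈ φ S) :
    (S.filter (fun s => w ∉ φ (S.erase s))).card
      = if (S.filter (fun s => w ∈ φ {s})).card = 1 then 1 else 0 := by
  have hmem : ∀ s t : α, t ∈ S.erase s → w ∈ φ {t} → w ∈ φ (S.erase s) := by
    intro s t ht hwt
    rw [hφ (S.erase s)]
    exact mem_biUnion.2 ⟨t, ht, hwt⟩
  have hnot : ∀ s : α, w ∉ φ (S.erase s) →
      S.filter (fun t => w ∈ φ {t}) ⊆ {s} := by
    intro s hns t ht
    rw [mem_filter] at ht
    rw [mem_singleton]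
    by_contra hts
    exact hns (hmem s t (mem_erase.2 ⟨hts, ht.1⟩) ht.2)
  have hKne : (S.filter (fun t => w ∈ φ {t})).Nonempty := by
    rw [hφ S, mem_biUnion] at hw
    obtain ⟨t, ht, hwt⟩ := hw
    exact ⟨t, mem_filter.2 ⟨ht, hwt⟩⟩
  by_cases h1 : (S.filter (fun s => w ∈ φ {s})).card = 1
  · obtain ⟨u, hu⟩ := card_eq_one.mp h1
    have huK : u ∈ S.filter (fun t => w ∈ φ {t}) := hu ▸ mem_singleton_self u
    rw [mem_filter] at huK
    rw [if_pos h1]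
    rw [card_eq_one]
    refine ⟨u, ?_⟩
    ext s
    simp only [mem_filter, mem_singleton]
    constructor
    · rintro ⟨hs, hns⟩
      have := hnot s hns
      rw [hu] at this
      have := this (mem_singleton_self u)
      rw [mem_singleton] at this
      exact this.symm
    · rintro rfl
      refine ⟨huK.1, fun hmem' => ?_⟩
      rw [hφ (S.erase s), mem_biUnion] at hmem'
      obtain ⟨t, ht, hwt⟩ := hmem'
      rw [mem_erase] at ht
      have : t ∈ S.filter (fun t => w ∈ φ {t}) := mem_filter.2 ⟨ht.2, hwt⟩
      rw [hu, mem_singleton] at this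
      exact ht.1 this
  · rw [if_neg h1]
    rw [card_eq_zero]
    rw [filter_eq_empty_iff]
    intro s hs hns
    have hsub := hnot s hns
    have h2 : (S.filter (fun t => w ∈ φ {t})).card = 1 := by
      have hpos := Finset.card_pos.2 hKne
      have hle := card_le_card hsub
      rw [card_singleton] at hle
      omega
    exact h1 h2

lemma erase_sum (φ : Finset α → Finset α)
    (hφ : ∀ S : Finset α, φ S = S.biUnion (fun s => φ {s}))
    (S : Finset α) :
    (∑ s ∈ S, (φ (S.erase s)).card) + (Tset φ S).card = S.card * (φ S).card := by
  have hsub : ∀ s : α, φ (S.erase s) ⊆ φ S := by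
    intro s
    rw [hφ (S.erase s), hφ S]
    exact biUnion_subset_biUnion_of_subset_left _ (erase_subset s S)
  have h1 : ∀ s : α, (φ (S.erase s)).card
      = ∑ w ∈ φ S, (if w ∈ φ (S.erase s) then 1 else 0) := by
    intro s
    rw [← card_filter]
    congr 1
    rw [filter_mem_eq_inter, inter_eq_right.2 (hsub s)]
  have h2 : (Tset φ S).card
      = ∑ w ∈ φ S, (if (S.filter (fun s => w ∈ φ {s})).card = 1 then 1 else 0) := by
    rw [Tset, card_filter]
  calc (∑ s ∈ S, (φ (S.erase s)).card) + (Tset φ S).card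
      = (∑ w ∈ φ S, ∑ s ∈ S, (if w ∈ φ (S.erase s) then 1 else 0))
        + ∑ w ∈ φ S, (if (S.filter (fun s => w ∈ φ {s})).card = 1 then 1 else 0) := by
        rw [h2]
        congr 1
        rw [← Finset.sum_comm]
        exact Finset.sum_congr rfl (fun s _ => h1 s)
    _ = ∑ w ∈ φ S, ((∑ s ∈ S, (if w ∈ φ (S.erase s) then 1 else 0))
        + (if (S.filter (fun s => w ∈ φ {s})).card = 1 then 1 else 0)) := by
        rw [Finset.sum_add_distrib]
    _ = ∑ w ∈ φ S, S.card := by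
        refine Finset.sum_congr rfl (fun w hw => ?_)
        rw [← card_filter, ← count_erase φ hφ S w hw]
        exact card_filter_add_card_filter_not _
    _ = S.card * (φ S).card := by
        rw [Finset.sum_const, smul_eq_mul, mul_comm]

lemma double_count (g : Finset α → ℕ) (n : ℕ) (hn : 1 ≤ n) :
    ∑ S ∈ powersetCard n (univ : Finset α), ∑ s ∈ S, g (S.erase s)
      = (Fintype.card α - (n - 1)) * ∑ S ∈ powersetCard (n-1) (univ : Finset α), g S := by
  have key : ∑ S ∈ powersetCard n (univ : Finset α), ∑ s ∈ S, g (S.erase s)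
      = ∑ S ∈ powersetCard (n-1) (univ : Finset α), ∑ _a ∈ Sᶜ, g S := by
    rw [Finset.sum_sigma' (powersetCard n (univ : Finset α)) (fun S => S)
      (fun S s => g (S.erase s)),
      Finset.sum_sigma' (powersetCard (n-1) (univ : Finset α)) (fun S => Sᶜ)
      (fun S _ => g S)]
    refine Finset.sum_nbij' (fun p => ⟨p.1.erase p.2, p.2⟩) (fun p => ⟨insert p.2 p.1, p.2⟩)
      ?_ ?_ ?_ ?_ ?_
    · rintro ⟨S, s⟩ hp
      rw [Finset.mem_sigma] at hp
      obtain ⟨hS, hs⟩ := hp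
      rw [mem_powersetCard_univ] at hS
      rw [Finset.mem_sigma]
      constructor
      · rw [mem_powersetCard_univ, card_erase_of_mem hs, hS]
      · simpa using not_mem_erase s S
    · rintro ⟨S, a⟩ hp
      rw [Finset.mem_sigma] at hp
      obtain ⟨hS, ha⟩ := hp
      rw [mem_powersetCard_univ] at hS
      rw [mem_compl] at ha
      rw [Finset.mem_sigma]
      constructor
      · rw [mem_powersetCard_univ, card_insert_of_notMem ha, hS]
        omega
      · exact mem_insert_self a S
    · rintro ⟨S, s⟩ hp
      rw [Finset.mem_sigma] at hp
      simp only [Sigma.mk.inj_iff, heq_eq_eq]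
      exact ⟨insert_erase hp.2, trivial⟩
    · rintro ⟨S, a⟩ hp
      rw [Finset.mem_sigma] at hp
      have ha : a ∉ S := by simpa using hp.2
      simp only [Sigma.mk.inj_iff, heq_eq_eq]
      exact ⟨erase_insert ha, trivial⟩
    · rintro ⟨S, s⟩ _
      rfl
  rw [key]
  rw [Finset.mul_sum]
  refine Finset.sum_congr rfl (fun S hS => ?_)
  rw [mem_powersetCard_univ] at hS
  rw [Finset.sum_const, smul_eq_mul, card_compl, hS]

lemma main_count (φ : Finset α → Finset α)
    (hφ : ∀ S : Finset α, φ S = S.biUnion (fun s => φ {s}))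
    (n : ℕ) (hn : 1 ≤ n) :
    (Fintype.card α - (n - 1)) * (∑ S ∈ powersetCard (n-1) (univ : Finset α), (φ S).card)
      + (∑ S ∈ powersetCard n (univ : Finset α), (Tset φ S).card)
      = n * ∑ S ∈ powersetCard n (univ : Finset α), (φ S).card := by
  have h1 : ∑ S ∈ powersetCard n (univ : Finset α),
      ((∑ s ∈ S, (φ (S.erase s)).card) + (Tset φ S).card)
      = ∑ S ∈ powersetCard n (univ : Finset α), n * (φ S).card := by
    refine Finset.sum_congr rfl (fun S hS => ?_)
    rw [mem_powersetCard_univ] at hS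
    rw [erase_sum φ hφ S, hS]
  rw [Finset.sum_add_distrib] at h1
  rw [double_count (fun S => (φ S).card) n hn] at h1
  rw [← Finset.mul_sum] at h1
  exact h1

theorem Ef_recursion (φ : Finset α → Finset α)
    (hφ : ∀ S : Finset α, φ S = S.biUnion (fun s => φ {s}))
    (hempty : φ ∅ = ∅) :
    (∀ n : ℕ, 1 ≤ n → n ≤ Fintype.card α →
      Ef φ n = Ef φ (n - 1) + ET φ n / (n : ℚ)) ∧
    (∀ n : ℕ, n ≤ Fintype.card α →
      Ef φ n = ∑ i ∈ Finset.Icc 1 n, ET φ i / (i : ℚ)) := by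
  have part1 : ∀ n : ℕ, 1 ≤ n → n ≤ Fintype.card α →
      Ef φ n = Ef φ (n - 1) + ET φ n / (n : ℚ) := by
    intro n hn hnN
    set N := Fintype.card α with hN
    -- notation
    set A : ℕ := ∑ S ∈ powersetCard n (univ : Finset α), (φ S).card with hA
    set B : ℕ := ∑ S ∈ powersetCard (n-1) (univ : Finset α), (φ S).card with hB
    set T : ℕ := ∑ S ∈ powersetCard n (univ : Finset α), (Tset φ S).card with hT
    have hkey := main_count φ hφ n hn
    have hchoose : N.choose n * n = N.choose (n-1) * (N - (n-1)) := by
      have := Nat.choose_succ_right_eq N (n-1)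
      have hn1 : n - 1 + 1 = n := by omega
      rwa [hn1] at this
    have hCn : (N.choose n : ℚ) ≠ 0 := by
      exact_mod_cast Nat.choose_pos hnN |>.ne'
    have hCm : (N.choose (n-1) : ℚ) ≠ 0 := by
      have : n - 1 ≤ N := by omega
      exact_mod_cast (Nat.choose_pos this).ne'
    have hnq : (n : ℚ) ≠ 0 := Nat.cast_ne_zero.mpr (by omega)
    have hNm : N - (n-1) ≠ 0 := by omega
    have hNmq : ((N - (n-1) : ℕ) : ℚ) ≠ 0 := by exact_mod_cast hNm
    have hEf : Ef φ n = (A : ℚ) / (N.choose n : ℚ) := by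
      rw [Ef, card_powersetCard, card_univ]
      push_cast [hA]
      rfl
    have hEf' : Ef φ (n-1) = (B : ℚ) / (N.choose (n-1) : ℚ) := by
      rw [Ef, card_powersetCard, card_univ]
      push_cast [hB]
      rfl
    have hET : ET φ n = (T : ℚ) / (N.choose n : ℚ) := by
      rw [ET, card_powersetCard, card_univ]
      push_cast [hT]
      rfl
    rw [hEf, hEf', hET]
    have hkeyq : ((N - (n-1) : ℕ) : ℚ) * B + T = (n : ℚ) * A := by
      exact_mod_cast hkey
    have hchooseq : (N.choose n : ℚ) * n = (N.choose (n-1) : ℚ) * ((N - (n-1) : ℕ) : ℚ) := by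
      exact_mod_cast hchoose
    rw [div_div, div_add_div _ _ hCm (mul_ne_zero hCn hnq),
      div_eq_div_iff hCn (mul_ne_zero hCm (mul_ne_zero hCn hnq))]
    linear_combination (-((N.choose (n-1) : ℚ) * (N.choose n : ℚ))) * hkeyq
      - ((B : ℚ) * (N.choose n : ℚ)) * hchooseq
  refine ⟨part1, ?_⟩
  intro n hnN
  induction n with
  | zero =>
    rw [show Finset.Icc 1 0 = ∅ by rfl, Finset.sum_empty]
    rw [Ef, powersetCard_zero]
    simp [hempty]
  | succ m ih =>
    have hm : m ≤ Fintype.card α := by omega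
    rw [part1 (m+1) (by omega) hnN]
    rw [Nat.add_sub_cancel, ih hm]
    rw [Finset.sum_Icc_succ_top (by omega)]
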